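/- Let ε > 0 and let P be a probability mass function on {0,1}^n such that d_EMD(P, Q) ≥ ε for every PMF Q on {0,1}^n whose support has at most m elements. Then for every nonempty set A ⊆ {0,1}^n with |A| ≤ m, Pr_{x∼P}[min_{y∈A} d(x,y) > ε/2] ≥ ε/2, where d is the normalized Hamming distance. -/

import Mathlib

open scoped BigOperators

/-- Normalized Hamming distance between strings of length `n`: `|{i : x i ≠ y i}| / n`. -/
noncomputable def nhdist {n : ℕ} {α : Type*} [DecidableEq α] (x y : Fin n → α) : ℝ :=
  (hammingDist x y : ℝ) / n

/-- `T` is a coupling (transfer distribution) of `P` and `Q`: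
its first marginal is `P` and its second marginal is `Q`. -/
def IsCoupling {α : Type*} (T : PMF (α × α)) (P Q : PMF α) : Prop :=
  T.map Prod.fst = P ∧ T.map Prod.snd = Q

/-- Expected cost `E_{(x,y)∼T}[d x y]` of a coupling on a finite type. -/
noncomputable def expCost {α : Type*} [Fintype α] (d : α → α → ℝ) (T : PMF (α × α)) : ℝ :=
  ∑ z : α × α, (T z).toReal * d z.1 z.2

/-- Earth mover's distance between PMFs on a finite type, w.r.t. the cost function `d`:
the infimum over all couplings of the expected cost. -/
noncomputable def emd {α : Type*} [Fintype α] (d : α → α → ℝ) (P Q : PMF α) : ℝ :=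
  sInf {r | ∃ T : PMF (α × α), IsCoupling T P Q ∧ r = expCost d T}

lemma nhdist_nonneg {n : ℕ} {α : Type*} [DecidableEq α] (x y : Fin n → α) : 0 ≤ nhdist x y :=
  div_nonneg (Nat.cast_nonneg _) (Nat.cast_nonneg _)

lemma nhdist_le_one {n : ℕ} {α : Type*} [DecidableEq α] (x y : Fin n → α) : nhdist x y ≤ 1 := by
  rcases Nat.eq_zero_or_pos n with h | h
  · simp [nhdist, h]
  · rw [nhdist, div_le_one (by exact_mod_cast h)]
    exact_mod_cast hammingDist_le_card_fintype.trans (by simp)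

open scoped Classical in
/-- If `P` is `ε`-far (in EMD) from every PMF supported on at most `m` elements, then for
every nonempty set `A` of at most `m` strings, a `P`-sample is `(ε/2)`-far from all of `A`
with probability at least `ε/2`. -/
theorem far_from_small_support (n m : ℕ) (ε : ℝ) (hε : 0 < ε) (P : PMF (Fin n → Bool))
    (hfar : ∀ Q : PMF (Fin n → Bool), Q.support.ncard ≤ m → ε ≤ emd nhdist P Q)
    (A : Finset (Fin n → Bool)) (hA : A.Nonempty) (hAm : A.card ≤ m) :
    ε / 2 ≤ ∑ x : Fin n → Bool,
      (if ε / 2 < A.inf' hA (fun y => nhdist x y) then (P x).toReal else 0) := by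
  set g : (Fin n → Bool) → ℝ := fun x => A.inf' hA (fun y => nhdist x y) with hg
  -- closest point function
  have hf : ∀ x, ∃ y, y ∈ A ∧ g x = nhdist x y := fun x =>
    Finset.exists_mem_eq_inf' hA (fun y => nhdist x y)
  choose f hfA hfd using hf
  -- Q := P.map f has small support
  have hQ : (P.map f).support.ncard ≤ m := by
    have hsub : (P.map f).support ⊆ ↑A := by
      rw [PMF.support_map]
      rintro _ ⟨x, -, rfl⟩
      exact hfA x
    calc (P.map f).support.ncard ≤ (↑A : Set (Fin n → Bool)).ncard :=
          Set.ncard_le_ncard hsub (A.finite_toSet)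
      _ = A.card := Set.ncard_coe_finset A
      _ ≤ m := hAm
  -- coupling
  set T : PMF ((Fin n → Bool) × (Fin n → Bool)) := P.map (fun x => (x, f x)) with hT
  have hcoup : IsCoupling T P (P.map f) := by
    constructor
    · rw [hT, PMF.map_comp]
      exact PMF.map_id P
    · rw [hT, PMF.map_comp]
      rfl
  -- compute expCost
  have hTz : ∀ z, (T z).toReal = ∑ x, if z = (x, f x) then (P x).toReal else 0 := by
    intro z
    rw [hT, PMF.map_apply, tsum_fintype, ENNReal.toReal_sum]
    · congr 1; ext x; split <;> simp
    · intro x _; split <;> simp [PMF.apply_ne_top]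
  have hcost : expCost nhdist T = ∑ x, (P x).toReal * nhdist x (f x) := by
    rw [expCost]
    simp_rw [hTz, Finset.sum_mul]
    rw [Finset.sum_comm]
    congr 1; ext x
    simp_rw [ite_mul, zero_mul]
    rw [Finset.sum_ite_eq' Finset.univ ((x, f x)) (fun z => (P x).toReal * nhdist z.1 z.2)]
    simp
  -- emd ≤ expCost T
  have hbdd : BddBelow {r | ∃ T' : PMF ((Fin n → Bool) × (Fin n → Bool)),
      IsCoupling T' P (P.map f) ∧ r = expCost nhdist T'} := by
    refine ⟨0, ?_⟩
    rintro r ⟨T', -, rfl⟩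
    exact Finset.sum_nonneg fun z _ => mul_nonneg ENNReal.toReal_nonneg (nhdist_nonneg _ _)
  have hle : ε ≤ ∑ x, (P x).toReal * nhdist x (f x) := by
    calc ε ≤ emd nhdist P (P.map f) := hfar _ hQ
      _ ≤ expCost nhdist T := csInf_le hbdd ⟨T, hcoup, rfl⟩
      _ = _ := hcost
  -- pointwise bound
  have hsum1 : ∑ x : Fin n → Bool, (P x).toReal = 1 := by
    rw [← ENNReal.toReal_sum (fun x _ => PMF.apply_ne_top P x)]
    rw [← tsum_fintype (L := .unconditional _), P.tsum_coe]; rfl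
  have hpt : ∀ x, (P x).toReal * nhdist x (f x) ≤
      (if ε / 2 < g x then (P x).toReal else 0) + ε / 2 * (P x).toReal := by
    intro x
    by_cases h : ε / 2 < g x
    · simp only [if_pos h]
      calc (P x).toReal * nhdist x (f x) ≤ (P x).toReal * 1 :=
            mul_le_mul_of_nonneg_left (nhdist_le_one _ _) ENNReal.toReal_nonneg
        _ ≤ (P x).toReal + ε / 2 * (P x).toReal := by
            nlinarith [ENNReal.toReal_nonneg (a := P x), hε]
    · simp only [if_neg h]
      push_neg at h
      rw [← hfd x] at *
      nlinarith [ENNReal.toReal_nonneg (a := P x)]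
  have := Finset.sum_le_sum (fun x (_ : x ∈ Finset.univ) => hpt x)
  rw [Finset.sum_add_distrib, ← Finset.mul_sum, hsum1, mul_one] at this
  have := hle.trans this
  linarith
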